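/- Let p be an odd prime and let c : ℕ → 𝔽_p be the p-Cantor sequence. Then in the formal power series ring 𝔽_p[[X]], one has (∑_{i≥0} c(i)·X^i)² · (1 + X²) = 1. (That is, the Laurent series of the p-Cantor sequence equals (1 + t^{−2})^{−1/2}.) -/

import Mathlib

open PowerSeries Finset

/-- "Stretch" a power series: substitute `X ↦ X^p`. -/
noncomputable def cantorStr (p : ℕ) (F : PowerSeries (ZMod p)) : PowerSeries (ZMod p) :=
  PowerSeries.mk fun n => if p ∣ n then PowerSeries.coeff (n / p) F else 0

lemma cantorStr_coeff (p : ℕ) (F : PowerSeries (ZMod p)) (n : ℕ) :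
    PowerSeries.coeff n (cantorStr p F) =
      if p ∣ n then PowerSeries.coeff (n / p) F else 0 :=
  PowerSeries.coeff_mk _ _

lemma cantorStr_mul (p : ℕ) (hp : 0 < p) (F G : PowerSeries (ZMod p)) :
    cantorStr p (F * G) = cantorStr p F * cantorStr p G := by
  ext n
  rw [PowerSeries.coeff_mul, cantorStr_coeff]
  by_cases hn : p ∣ n
  · obtain ⟨m, rfl⟩ := hn
    rw [if_pos ⟨m, rfl⟩, Nat.mul_div_cancel_left m hp, PowerSeries.coeff_mul]
    refine Finset.sum_of_injOn (fun q => (p * q.1, p * q.2)) ?_ ?_ ?_ ?_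
    · rintro ⟨a, b⟩ - ⟨a', b'⟩ - h
      simp only [Prod.mk.injEq] at h
      exact Prod.ext (Nat.eq_of_mul_eq_mul_left hp h.1) (Nat.eq_of_mul_eq_mul_left hp h.2)
    · rintro ⟨a, b⟩ hab
      simp only [Finset.coe_sort_coe, Finset.mem_coe, Finset.HasAntidiagonal.mem_antidiagonal] at hab ⊢
      rw [← Nat.mul_add, hab]
    · rintro ⟨a, b⟩ hab himg
      simp only [Finset.HasAntidiagonal.mem_antidiagonal] at hab
      rw [cantorStr_coeff, cantorStr_coeff]
      by_cases ha : p ∣ a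
      · have hb : p ∣ b := (Nat.dvd_add_right ha).mp (hab ▸ ⟨m, rfl⟩)
        exfalso
        obtain ⟨a', rfl⟩ := ha; obtain ⟨b', rfl⟩ := hb
        refine himg ⟨(a', b'), ?_, rfl⟩
        simp only [Finset.coe_sort_coe, Finset.mem_coe, Finset.HasAntidiagonal.mem_antidiagonal]
        rw [← Nat.mul_add] at hab
        exact Nat.eq_of_mul_eq_mul_left hp hab
      · rw [if_neg ha, zero_mul]
    · rintro ⟨a, b⟩ hab
      simp [cantorStr_coeff, Nat.mul_div_cancel_left _ hp]
  · rw [if_neg hn]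
    refine (Finset.sum_eq_zero ?_).symm
    rintro ⟨a, b⟩ hab
    simp only [Finset.HasAntidiagonal.mem_antidiagonal] at hab
    rw [cantorStr_coeff, cantorStr_coeff]
    by_cases ha : p ∣ a
    · have hb : ¬ p ∣ b := fun hb => hn (hab ▸ Nat.dvd_add ha hb)
      rw [if_neg hb, mul_zero]
    · rw [if_neg ha, zero_mul]

lemma coeff_one_add_X_sq_pow (p m i : ℕ) :
    PowerSeries.coeff (R := ZMod p) i ((1 + PowerSeries.X ^ 2) ^ m) =
      if i % 2 = 0 ∧ i / 2 ≤ m then ((m.choose (i / 2) : ℕ) : ZMod p) else 0 := by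
  rw [add_comm, add_pow]
  simp only [one_pow, mul_one, ← pow_mul, map_sum]
  have : ∀ k ∈ Finset.range (m + 1),
      PowerSeries.coeff (R := ZMod p) i ((PowerSeries.X : PowerSeries (ZMod p)) ^ (2 * k)
          * ((m.choose k : ℕ) : PowerSeries (ZMod p))) =
        if i = 2 * k then ((m.choose k : ℕ) : ZMod p) else 0 := by
    intro k _
    rw [← map_natCast ((PowerSeries.C (R := ZMod p))) (m.choose k), PowerSeries.coeff_mul_C,
      PowerSeries.coeff_X_pow]
    split <;> simp
  rw [Finset.sum_congr rfl this]
  by_cases he : i % 2 = 0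
  · by_cases hle : i / 2 ≤ m
    · rw [if_pos ⟨he, hle⟩, Finset.sum_eq_single (i / 2)]
      · rw [if_pos (by omega)]
      · intro b _ hb
        rw [if_neg (by omega)]
      · intro h
        exact absurd (Finset.mem_range.mpr (by omega)) h
    · rw [if_neg (by tauto)]
      refine Finset.sum_eq_zero fun k hk => ?_
      rw [if_neg (by simp only [Finset.mem_range] at hk; omega)]
  · rw [if_neg (by tauto)]
    refine Finset.sum_eq_zero fun k hk => ?_
    rw [if_neg (by omega)]

/-- the square of the power series of the p-Cantor sequence
times (1 + X²) equals 1 in 𝔽_p[[X]]. -/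
theorem cantor_series_sq (p : ℕ) (hp : p.Prime) (hodd : Odd p)
    (c : ℕ → ZMod p)
    (hc0 : c 0 = 1)
    (hc : ∀ n i : ℕ, i < p →
      c (p * n + i) =
        (if i % 2 = 0 then ((((p - 1) / 2).choose (i / 2) : ℕ) : ZMod p) else 0) * c n) :
    (PowerSeries.mk c) ^ 2 * (1 + PowerSeries.X ^ 2) = 1 := by
  haveI : Fact p.Prime := ⟨hp⟩
  have hp0 : 0 < p := hp.pos
  haveI hchar : CharP (PowerSeries (ZMod p)) p := by
    refine ⟨fun n => ?_⟩
    rw [← map_natCast ((PowerSeries.C (R := ZMod p))) n,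
      map_eq_zero_iff _ PowerSeries.C_injective,
      ZMod.natCast_eq_zero_iff]
  set F := PowerSeries.mk c with hF
  set A : PowerSeries (ZMod p) := (1 + PowerSeries.X ^ 2) ^ ((p - 1) / 2) with hA
  -- Step 1 : F = A * stretch F
  have hkey : F = A * cantorStr p F := by
    ext n
    rw [PowerSeries.coeff_mul, Finset.sum_eq_single (n % p, p * (n / p))]
    · dsimp only
      have hmem : p * (n / p) + n % p = n := Nat.div_add_mod n p
      have hlt : n % p < p := Nat.mod_lt n hp0
      rw [hF, hA, coeff_one_add_X_sq_pow, cantorStr_coeff, if_pos (dvd_mul_right p (n / p)),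
        Nat.mul_div_cancel_left _ hp0, PowerSeries.coeff_mk, PowerSeries.coeff_mk]
      conv_lhs => rw [← hmem]
      rw [hc (n / p) (n % p) hlt]
      by_cases he : n % p % 2 = 0
      · rw [if_pos he, if_pos (⟨he, by omega⟩ : n % p % 2 = 0 ∧ n % p / 2 ≤ (p - 1) / 2)]
      · rw [if_neg he, if_neg (fun h => he h.1 : ¬(n % p % 2 = 0 ∧ n % p / 2 ≤ (p - 1) / 2))]
    · rintro ⟨a, b⟩ hab hne
      rw [Finset.HasAntidiagonal.mem_antidiagonal] at hab
      dsimp only at hab hne ⊢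
      rw [hA, coeff_one_add_X_sq_pow, cantorStr_coeff]
      by_cases hb : p ∣ b
      · by_cases ha : a % 2 = 0 ∧ a / 2 ≤ (p - 1) / 2
        · exfalso
          have hap : a < p := by obtain ⟨h1, h2⟩ := ha; omega
          obtain ⟨b', rfl⟩ := hb
          have e1 : n % p = a := by
            rw [← hab, Nat.add_mul_mod_self_left, Nat.mod_eq_of_lt hap]
          have e2 : p * (n / p) + n % p = n := Nat.div_add_mod n p
          rw [e1] at e2
          have e4 : a + p * b' = p * (n / p) + a := hab.trans e2.symm
          rw [Nat.add_comm (p * (n / p)) a] at e4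
          have e3 : p * b' = p * (n / p) := Nat.add_left_cancel e4
          exact hne (by rw [← e1, e3])
        · rw [if_neg ha, zero_mul]
      · rw [if_neg hb, mul_zero]
    · intro h
      exact absurd (Finset.HasAntidiagonal.mem_antidiagonal.mpr (Nat.mod_add_div n p)) h
  -- Step 2 : the quantity G := F² (1+X²) is invariant under stretching
  set G : PowerSeries (ZMod p) := F ^ 2 * (1 + PowerSeries.X ^ 2) with hG
  have hstr12 : cantorStr p (1 + PowerSeries.X ^ 2) = (1 + PowerSeries.X ^ 2) ^ p := by
    have hpow : ((1 : PowerSeries (ZMod p)) + PowerSeries.X ^ 2) ^ p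
        = 1 + PowerSeries.X ^ (2 * p) := by
      rw [add_pow_char, one_pow, ← pow_mul]
    rw [hpow]
    ext n
    rw [cantorStr_coeff]
    by_cases hn : p ∣ n
    · obtain ⟨m, rfl⟩ := hn
      rw [if_pos ⟨m, rfl⟩, Nat.mul_div_cancel_left m hp0]
      simp only [map_add, PowerSeries.coeff_one, PowerSeries.coeff_X_pow]
      have h0 : p * m = 0 ↔ m = 0 := by rw [Nat.mul_eq_zero]; omega
      have h2 : p * m = 2 * p ↔ m = 2 := by
        rw [mul_comm 2 p]
        exact ⟨fun h => Nat.eq_of_mul_eq_mul_left hp0 h, fun h => by rw [h]⟩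
      simp only [h0, h2]
    · rw [if_neg hn]
      simp only [map_add, PowerSeries.coeff_one, PowerSeries.coeff_X_pow]
      have h1 : ¬ n = 0 := fun h => hn (h ▸ dvd_zero p)
      have h2 : ¬ n = 2 * p := fun h => hn (h ▸ dvd_mul_left p 2)
      rw [if_neg h1, if_neg h2, add_zero]
  have hGstr : G = cantorStr p G := by
    have hA2 : A * A = (1 + PowerSeries.X ^ 2) ^ (p - 1) := by
      rw [hA, ← pow_add]
      congr 1
      obtain ⟨k, hk⟩ := hodd
      omega
    calc G = (A * cantorStr p F) ^ 2 * (1 + PowerSeries.X ^ 2) := by rw [hG, ← hkey]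
      _ = (A * A) * (1 + PowerSeries.X ^ 2) * (cantorStr p F * cantorStr p F) := by ring
      _ = (1 + PowerSeries.X ^ 2) ^ p * (cantorStr p F * cantorStr p F) := by
          rw [hA2, ← pow_succ, Nat.sub_add_cancel hp0]
      _ = cantorStr p (1 + PowerSeries.X ^ 2) * cantorStr p (F * F) := by
          rw [hstr12, cantorStr_mul p hp0]
      _ = cantorStr p (F * F * (1 + PowerSeries.X ^ 2)) := by
          rw [cantorStr_mul p hp0 (F * F), mul_comm]
      _ = cantorStr p G := by rw [hG]; ring_nf
  -- Step 3 : conclude : all positive coefficients of G vanish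
  have hG0 : PowerSeries.coeff (R := ZMod p) 0 G = 1 := by
    rw [hG, hF]
    simp [PowerSeries.coeff_zero_eq_constantCoeff, hc0]
  have hcoeff : ∀ n, PowerSeries.coeff (R := ZMod p) n G = if n = 0 then 1 else 0 := by
    intro n
    induction n using Nat.strong_induction_on with
    | _ n ih =>
      rcases Nat.eq_zero_or_pos n with rfl | hn
      · rw [if_pos rfl]; exact hG0
      · rw [if_neg hn.ne', hGstr, cantorStr_coeff]
        by_cases hd : p ∣ n
        · obtain ⟨m, rfl⟩ := hd
          rw [if_pos ⟨m, rfl⟩, Nat.mul_div_cancel_left m hp0]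
          have hm : 0 < m := by
            rcases Nat.eq_zero_or_pos m with rfl | h
            · simp at hn
            · exact h
          have hlt : m < p * m := by
            have h1 := hp.one_lt
            nlinarith
          rw [ih m hlt, if_neg hm.ne']
        · rw [if_neg hd]
  ext n
  rw [hcoeff n, PowerSeries.coeff_one]
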